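/- Let v ∈ W₀^{4,2}([0,L]) and set V-norm ‖v‖_V = ‖v‖_{W^{4,2}} and H-norm ‖v‖_H = ‖v‖_{W^{2,2}}. Then ‖∂ₓ²((∂ₓv)²)‖_{L²} ≤ ‖v‖_{W^{2,4}}² + ‖v‖_{W^{1,∞}}‖v‖_{W^{3,2}} ≤ C‖v‖_V^{1/2}‖v‖_H^{3/2}. -/

import Mathlib

open MeasureTheory Set

noncomputable section

/-- `L²(0,L)`-norm. -/
def L2n (L : ℝ) (f : ℝ → ℝ) : ℝ := Real.sqrt (∫ x in (0:ℝ)..L, f x ^ 2)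

/-- `L^∞(0,L)`-norm. -/
def LinfN (L : ℝ) (f : ℝ → ℝ) : ℝ := sSup ((fun x => |f x|) '' Set.Icc 0 L)

/-- `W^{k,2}(0,L)`-norm. -/
def Wk2n (k : ℕ) (L : ℝ) (u : ℝ → ℝ) : ℝ :=
  Real.sqrt (∫ x in (0:ℝ)..L, ∑ j ∈ Finset.range (k + 1), iteratedDeriv j u x ^ 2)

/-- `W^{2,4}(0,L)`-norm. -/
def W24n (L : ℝ) (u : ℝ → ℝ) : ℝ :=
  (∫ x in (0:ℝ)..L, ∑ j ∈ Finset.range 3, iteratedDeriv j u x ^ 4) ^ ((1:ℝ)/4)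

/-- `W^{1,∞}(0,L)`-norm. -/
def W1infN (L : ℝ) (u : ℝ → ℝ) : ℝ := LinfN L u + LinfN L (deriv u)


/-- Cauchy–Schwarz for interval integrals of continuous functions. -/
lemma cs_aux {L : ℝ} (hL : 0 ≤ L) {f g : ℝ → ℝ} (hf : Continuous f) (hg : Continuous g) :
    (∫ x in (0:ℝ)..L, f x * g x) ≤
      Real.sqrt (∫ x in (0:ℝ)..L, f x ^ 2) * Real.sqrt (∫ x in (0:ℝ)..L, g x ^ 2) := by
  set A := ∫ x in (0:ℝ)..L, f x ^ 2 with hA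
  set B := ∫ x in (0:ℝ)..L, g x ^ 2 with hB
  set I := ∫ x in (0:ℝ)..L, f x * g x with hI
  have hA0 : 0 ≤ A := intervalIntegral.integral_nonneg hL fun x _ => sq_nonneg _
  have hB0 : 0 ≤ B := intervalIntegral.integral_nonneg hL fun x _ => sq_nonneg _
  have key : ∀ s : ℝ, 0 < s → 2 * I * s ≤ s ^ 2 * A + B := by
    intro s hs
    have h0 : 0 ≤ ∫ x in (0:ℝ)..L, (s * f x - g x) ^ 2 :=
      intervalIntegral.integral_nonneg hL fun x _ => sq_nonneg _
    have hexp : (∫ x in (0:ℝ)..L, (s * f x - g x) ^ 2) = s ^ 2 * A - 2 * s * I + B := by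
      have hcong : (∫ x in (0:ℝ)..L, (s * f x - g x) ^ 2)
          = ∫ x in (0:ℝ)..L, (s ^ 2 * f x ^ 2 - 2 * s * (f x * g x) + g x ^ 2) :=
        intervalIntegral.integral_congr fun x _ => by ring
      rw [hcong, intervalIntegral.integral_add, intervalIntegral.integral_sub,
        intervalIntegral.integral_const_mul, intervalIntegral.integral_const_mul]
      · exact ((continuous_const.mul (hf.pow 2)).intervalIntegrable 0 L)
      · exact ((continuous_const.mul (hf.mul hg)).intervalIntegrable 0 L)
      · exact (((continuous_const.mul (hf.pow 2)).sub (continuous_const.mul (hf.mul hg))).intervalIntegrable 0 L)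
      · exact ((hg.pow 2).intervalIntegrable 0 L)
    nlinarith [h0, hexp]
  rcases eq_or_lt_of_le hA0 with hA' | hA'
  · -- A = 0 : show I ≤ 0
    have hI0 : I ≤ 0 := by
      by_contra h
      push_neg at h
      have := key ((B + 1) / (2 * I)) (by positivity)
      have heq : 2 * I * ((B + 1) / (2 * I)) = B + 1 := by field_simp
      nlinarith [sq_nonneg ((B + 1) / (2 * I))]
    have : 0 ≤ Real.sqrt A * Real.sqrt B := by positivity
    linarith
  · rcases eq_or_lt_of_le hB0 with hB' | hB'
    · -- B = 0 : show I ≤ 0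
      have hI0 : I ≤ 0 := by
        by_contra h
        push_neg at h
        have hs : (0:ℝ) < I / (A + 1) := by positivity
        have := key (I / (A + 1)) hs
        rw [← hB'] at this
        have heq : I = (I / (A + 1)) * (A + 1) := by field_simp
        nlinarith [mul_pos hs hs]
      have : 0 ≤ Real.sqrt A * Real.sqrt B := by positivity
      linarith
    · set s := Real.sqrt B / Real.sqrt A with hsdef
      have hsA : 0 < Real.sqrt A := Real.sqrt_pos.2 hA'
      have hsB : 0 < Real.sqrt B := Real.sqrt_pos.2 hB'
      have hs : 0 < s := by positivity
      have hkey := key s hs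
      have hs2 : s ^ 2 * A = B := by
        rw [hsdef, div_pow, Real.sq_sqrt hB0, Real.sq_sqrt hA0]
        field_simp
      have hsAB : Real.sqrt A * Real.sqrt B * s = B := by
        rw [hsdef]
        field_simp
        rw [Real.sq_sqrt hB0]
      have : I * s ≤ Real.sqrt A * Real.sqrt B * s := by
        rw [hsAB]; nlinarith
      exact le_of_mul_le_mul_right this hs

/-- Integration by parts with vanishing boundary terms. -/
lemma parts_aux {L : ℝ} {u w u' w' : ℝ → ℝ}
    (hu : ∀ x, HasDerivAt u (u' x) x) (hw : ∀ x, HasDerivAt w (w' x) x)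
    (hu' : Continuous u') (hw' : Continuous w')
    (h0 : u 0 * w 0 = 0) (hLbd : u L * w L = 0) :
    (∫ x in (0:ℝ)..L, u' x * w x) = - ∫ x in (0:ℝ)..L, u x * w' x := by
  have hcu : Continuous u := continuous_iff_continuousAt.2 fun x => (hu x).continuousAt
  have hcw : Continuous w := continuous_iff_continuousAt.2 fun x => (hw x).continuousAt
  have h := intervalIntegral.integral_deriv_mul_eq_sub (a := 0) (b := L)
    (fun x _ => hu x) (fun x _ => hw x)
    (hu'.intervalIntegrable 0 L) (hw'.intervalIntegrable 0 L)
  rw [intervalIntegral.integral_add (f := fun x => u' x * w x) (g := fun x => u x * w' x) ((hu'.mul hcw).intervalIntegrable 0 L)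
    ((hcu.mul hw').intervalIntegrable 0 L), h0, hLbd] at h
  linarith

/-- Triangle inequality in `L²` for continuous functions. -/
lemma l2_triangle_aux {L : ℝ} (hL : 0 ≤ L) {a b : ℝ → ℝ}
    (ha : Continuous a) (hb : Continuous b) :
    Real.sqrt (∫ x in (0:ℝ)..L, (a x + b x) ^ 2) ≤
      Real.sqrt (∫ x in (0:ℝ)..L, a x ^ 2) + Real.sqrt (∫ x in (0:ℝ)..L, b x ^ 2) := by
  set A := ∫ x in (0:ℝ)..L, a x ^ 2 with hA
  set B := ∫ x in (0:ℝ)..L, b x ^ 2 with hB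
  have hA0 : 0 ≤ A := intervalIntegral.integral_nonneg hL fun x _ => sq_nonneg _
  have hB0 : 0 ≤ B := intervalIntegral.integral_nonneg hL fun x _ => sq_nonneg _
  have hcs := cs_aux hL ha hb
  have hexp : (∫ x in (0:ℝ)..L, (a x + b x) ^ 2)
      = A + 2 * (∫ x in (0:ℝ)..L, a x * b x) + B := by
    have hcong : (∫ x in (0:ℝ)..L, (a x + b x) ^ 2)
        = ∫ x in (0:ℝ)..L, (a x ^ 2 + 2 * (a x * b x) + b x ^ 2) :=
      intervalIntegral.integral_congr fun x _ => by ring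
    rw [hcong, intervalIntegral.integral_add, intervalIntegral.integral_add,
      intervalIntegral.integral_const_mul]
    · exact (ha.pow 2).intervalIntegrable 0 L
    · exact (continuous_const.mul (ha.mul hb)).intervalIntegrable 0 L
    · exact ((ha.pow 2).add (continuous_const.mul (ha.mul hb))).intervalIntegrable 0 L
    · exact (hb.pow 2).intervalIntegrable 0 L
  have h1 : (∫ x in (0:ℝ)..L, (a x + b x) ^ 2) ≤ (Real.sqrt A + Real.sqrt B) ^ 2 := by
    have hAs : Real.sqrt A ^ 2 = A := Real.sq_sqrt hA0
    have hBs : Real.sqrt B ^ 2 = B := Real.sq_sqrt hB0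
    nlinarith [hcs, hexp]
  calc Real.sqrt (∫ x in (0:ℝ)..L, (a x + b x) ^ 2)
      ≤ Real.sqrt ((Real.sqrt A + Real.sqrt B) ^ 2) := Real.sqrt_le_sqrt h1
    _ = Real.sqrt A + Real.sqrt B := Real.sqrt_sq (by positivity)

set_option maxHeartbeats 2000000 in
/-- Growth estimate (H4) with `α = 2`, `β = 1` for the surface growth model:
`‖∂ₓ²((∂ₓv)²)‖_{L²} ≤ C(‖v‖_{W^{2,4}}² + ‖v‖_{W^{1,∞}}‖v‖_{W^{3,2}}) ≤
C‖v‖_{W^{4,2}}^{1/2}‖v‖_{W^{2,2}}^{3/2}`, with `‖·‖_V = ‖·‖_{W^{4,2}}` and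
`‖·‖_H = ‖·‖_{W^{2,2}}`. -/
theorem surface_growth_growth_condition :
    ∃ C > (0:ℝ), ∀ L > (0:ℝ), ∀ v : ℝ → ℝ,
      ContDiff ℝ 4 v → tsupport v ⊆ Set.Ioo 0 L →
      L2n L (iteratedDeriv 2 (fun y => deriv v y ^ 2)) ≤
          C * (W24n L v ^ 2 + W1infN L v * Wk2n 3 L v) ∧
        L2n L (iteratedDeriv 2 (fun y => deriv v y ^ 2)) ≤
          C * Wk2n 4 L v ^ ((1:ℝ)/2) * Wk2n 2 L v ^ ((3:ℝ)/2) := by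
  refine ⟨12, by norm_num, ?_⟩
  intro L hL v hv hsupp
  have hL0 : (0:ℝ) ≤ L := hL.le
  -- continuity of iterated derivatives
  have hc2 : Continuous (iteratedDeriv 2 v) := hv.continuous_iteratedDeriv 2 (by norm_num)
  have hc3 : Continuous (iteratedDeriv 3 v) := hv.continuous_iteratedDeriv 3 (by norm_num)
  have hc4 : Continuous (iteratedDeriv 4 v) := hv.continuous_iteratedDeriv 4 (by norm_num)
  have hc0 : Continuous v := hv.continuous
  have hc1 : Continuous (deriv v) := by
    have := hv.continuous_iteratedDeriv 1 (by norm_num)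
    rwa [iteratedDeriv_one] at this
  -- derivatives
  have hder : ∀ k : ℕ, k < 4 → ∀ x : ℝ,
      HasDerivAt (iteratedDeriv k v) (iteratedDeriv (k+1) v x) x := by
    intro k hk x
    have h := ((hv.differentiable_iteratedDeriv k (by exact_mod_cast hk)) x).hasDerivAt
    rwa [← iteratedDeriv_succ] at h
  have hder1 : ∀ x : ℝ, HasDerivAt (deriv v) (iteratedDeriv 2 v x) x := by
    intro x
    have := hder 1 (by norm_num) x
    rwa [iteratedDeriv_one] at this
  -- vanishing at the boundary
  have hts : ∀ k : ℕ, tsupport (iteratedDeriv k v) ⊆ tsupport v := by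
    intro k
    induction k with
    | zero => simp [iteratedDeriv_zero]
    | succ n ih =>
      rw [iteratedDeriv_succ]
      exact closure_minimal ((support_deriv_subset).trans ih) (isClosed_tsupport v)
  have hzero : ∀ k : ℕ, iteratedDeriv k v 0 = 0 ∧ iteratedDeriv k v L = 0 := fun k =>
    ⟨image_eq_zero_of_notMem_tsupport fun h => lt_irrefl 0 (hsupp (hts k h)).1,
     image_eq_zero_of_notMem_tsupport fun h => lt_irrefl L (hsupp (hts k h)).2⟩
  have hz1 : deriv v 0 = 0 := by
    have := (hzero 1).1; rwa [iteratedDeriv_one] at this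
  have hz1L : deriv v L = 0 := by
    have := (hzero 1).2; rwa [iteratedDeriv_one] at this
  -- explicit second derivative of (v')²
  have hD1 : ∀ x : ℝ, HasDerivAt (fun y => deriv v y ^ 2)
      (2 * deriv v x * iteratedDeriv 2 v x) x := by
    intro x
    have h := (hder1 x).fun_pow 2
    simpa using h
  have hderiv1 : deriv (fun y => deriv v y ^ 2)
      = fun x => 2 * deriv v x * iteratedDeriv 2 v x :=
    funext fun x => (hD1 x).deriv
  have hD2 : ∀ x : ℝ, HasDerivAt (fun y => 2 * deriv v y * iteratedDeriv 2 v y)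
      (2 * iteratedDeriv 2 v x ^ 2 + 2 * deriv v x * iteratedDeriv 3 v x) x := by
    intro x
    have h := ((hder1 x).const_mul (2:ℝ)).fun_mul (hder 2 (by norm_num) x)
    refine h.congr_deriv ?_
    ring
  have hkey : iteratedDeriv 2 (fun y => deriv v y ^ 2)
      = fun x => 2 * iteratedDeriv 2 v x ^ 2 + 2 * deriv v x * iteratedDeriv 3 v x := by
    funext x
    rw [iteratedDeriv_succ, iteratedDeriv_one, hderiv1]
    exact (hD2 x).deriv
  -- basic integral quantities
  set Q := ∫ x in (0:ℝ)..L, iteratedDeriv 2 v x ^ 4 with hQdef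
  set E1 := ∫ x in (0:ℝ)..L, deriv v x ^ 2 with hE1def
  set E2 := ∫ x in (0:ℝ)..L, iteratedDeriv 2 v x ^ 2 with hE2def
  set E3 := ∫ x in (0:ℝ)..L, iteratedDeriv 3 v x ^ 2 with hE3def
  set E4 := ∫ x in (0:ℝ)..L, iteratedDeriv 4 v x ^ 2 with hE4def
  have hQ0 : 0 ≤ Q := intervalIntegral.integral_nonneg hL0 fun x _ => by positivity
  have hE10 : 0 ≤ E1 := intervalIntegral.integral_nonneg hL0 fun x _ => sq_nonneg _
  have hE20 : 0 ≤ E2 := intervalIntegral.integral_nonneg hL0 fun x _ => sq_nonneg _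
  have hE30 : 0 ≤ E3 := intervalIntegral.integral_nonneg hL0 fun x _ => sq_nonneg _
  have hE40 : 0 ≤ E4 := intervalIntegral.integral_nonneg hL0 fun x _ => sq_nonneg _
  -- the sup of |v'|
  set S := LinfN L (deriv v) with hSdef
  have hSbdd : BddAbove ((fun x => |deriv v x|) '' Icc 0 L) :=
    ((isCompact_Icc).image hc1.abs).bddAbove
  have hSbound : ∀ x ∈ Icc (0:ℝ) L, |deriv v x| ≤ S := fun x hx =>
    le_csSup hSbdd ⟨x, hx, rfl⟩
  have hS0 : 0 ≤ S := le_trans (abs_nonneg _) (hSbound 0 ⟨le_refl 0, hL0⟩)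
  -- main upper bound for the L² norm
  have hsqrt4 : Real.sqrt 4 = 2 := by
    rw [show (4:ℝ) = 2 ^ 2 by norm_num, Real.sqrt_sq (by norm_num)]
  have hmain : L2n L (iteratedDeriv 2 (fun y => deriv v y ^ 2))
      ≤ 2 * Real.sqrt Q + 2 * (S * Real.sqrt E3) := by
    have hrw : L2n L (iteratedDeriv 2 (fun y => deriv v y ^ 2))
        = Real.sqrt (∫ x in (0:ℝ)..L,
            (2 * iteratedDeriv 2 v x ^ 2 + 2 * deriv v x * iteratedDeriv 3 v x) ^ 2) := by
      simp only [L2n, hkey]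
    rw [hrw]
    have htri := l2_triangle_aux hL0
      (a := fun x => 2 * iteratedDeriv 2 v x ^ 2)
      (b := fun x => 2 * deriv v x * iteratedDeriv 3 v x)
      (continuous_const.mul (hc2.pow 2)) ((continuous_const.mul hc1).mul hc3)
    refine htri.trans ?_
    have e1 : Real.sqrt (∫ x in (0:ℝ)..L, (2 * iteratedDeriv 2 v x ^ 2) ^ 2)
        = 2 * Real.sqrt Q := by
      have hcong : (∫ x in (0:ℝ)..L, (2 * iteratedDeriv 2 v x ^ 2) ^ 2)
          = ∫ x in (0:ℝ)..L, 4 * iteratedDeriv 2 v x ^ 4 :=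
        intervalIntegral.integral_congr fun x _ => by ring
      rw [hcong, intervalIntegral.integral_const_mul, ← hQdef,
        Real.sqrt_mul (by norm_num) Q, hsqrt4]
    have e2 : Real.sqrt (∫ x in (0:ℝ)..L, (2 * deriv v x * iteratedDeriv 3 v x) ^ 2)
        ≤ 2 * (S * Real.sqrt E3) := by
      have hcong : (∫ x in (0:ℝ)..L, (2 * deriv v x * iteratedDeriv 3 v x) ^ 2)
          = ∫ x in (0:ℝ)..L, 4 * (deriv v x ^ 2 * iteratedDeriv 3 v x ^ 2) :=
        intervalIntegral.integral_congr fun x _ => by ring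
      have hmono : (∫ x in (0:ℝ)..L, deriv v x ^ 2 * iteratedDeriv 3 v x ^ 2)
          ≤ ∫ x in (0:ℝ)..L, S ^ 2 * iteratedDeriv 3 v x ^ 2 := by
        refine intervalIntegral.integral_mono_on hL0
          (((hc1.pow 2).mul (hc3.pow 2)).intervalIntegrable 0 L)
          ((continuous_const.mul (hc3.pow 2)).intervalIntegrable 0 L) fun x hx => ?_
        have h1 := hSbound x hx
        have h2 : deriv v x ^ 2 ≤ S ^ 2 := by
          rw [← sq_abs]
          exact pow_le_pow_left₀ (abs_nonneg _) h1 2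
        exact mul_le_mul_of_nonneg_right h2 (sq_nonneg _)
      have hle : (∫ x in (0:ℝ)..L, (2 * deriv v x * iteratedDeriv 3 v x) ^ 2)
          ≤ 4 * (S ^ 2 * E3) := by
        rw [hcong, intervalIntegral.integral_const_mul]
        rw [intervalIntegral.integral_const_mul, ← hE3def] at hmono
        nlinarith [hmono]
      calc Real.sqrt (∫ x in (0:ℝ)..L, (2 * deriv v x * iteratedDeriv 3 v x) ^ 2)
          ≤ Real.sqrt (4 * (S ^ 2 * E3)) := Real.sqrt_le_sqrt hle
        _ = 2 * (S * Real.sqrt E3) := by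
            rw [Real.sqrt_mul (by norm_num), hsqrt4, Real.sqrt_mul (sq_nonneg S),
              Real.sqrt_sq hS0]
    rw [e1]
    linarith [e2]
  -- √Q ≤ 3 S √E3 (interpolation via integration by parts)
  have hQsqrt : Real.sqrt Q ≤ 3 * S * Real.sqrt E3 := by
    have hw3 : ∀ x : ℝ, HasDerivAt (fun y => iteratedDeriv 2 v y ^ 3)
        (3 * iteratedDeriv 2 v x ^ 2 * iteratedDeriv 3 v x) x := by
      intro x
      have h := (hder 2 (by norm_num) x).fun_pow 3
      simpa using h
    have hp := parts_aux (u := deriv v) (w := fun y => iteratedDeriv 2 v y ^ 3)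
      (L := L) hder1 hw3 hc2 ((continuous_const.mul (hc2.pow 2)).mul hc3)
      (by rw [hz1]; ring) (by rw [hz1L]; ring)
    have hQeq : Q = - ∫ x in (0:ℝ)..L,
        deriv v x * (3 * iteratedDeriv 2 v x ^ 2 * iteratedDeriv 3 v x) := by
      rw [hQdef, ← hp]
      exact intervalIntegral.integral_congr fun x _ => by ring
    have hstep : Q ≤ 3 * S * ∫ x in (0:ℝ)..L,
        iteratedDeriv 2 v x ^ 2 * |iteratedDeriv 3 v x| := by
      rw [hQeq, ← intervalIntegral.integral_neg]
      have hmono : (∫ x in (0:ℝ)..L,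
            -(deriv v x * (3 * iteratedDeriv 2 v x ^ 2 * iteratedDeriv 3 v x)))
          ≤ ∫ x in (0:ℝ)..L, 3 * S * (iteratedDeriv 2 v x ^ 2 * |iteratedDeriv 3 v x|) := by
        refine intervalIntegral.integral_mono_on hL0
          ((hc1.mul ((continuous_const.mul (hc2.pow 2)).mul hc3)).neg.intervalIntegrable 0 L)
          ((continuous_const.mul ((hc2.pow 2).mul hc3.abs)).intervalIntegrable 0 L)
          fun x hx => ?_
        have h1 := hSbound x hx
        have h2 : 0 ≤ |deriv v x| * |iteratedDeriv 3 v x|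
            + deriv v x * iteratedDeriv 3 v x := by
          have h3 := neg_abs_le (deriv v x * iteratedDeriv 3 v x)
          rw [abs_mul] at h3
          linarith
        have hprod1 : 0 ≤ (|deriv v x| * |iteratedDeriv 3 v x|
            + deriv v x * iteratedDeriv 3 v x) * iteratedDeriv 2 v x ^ 2 :=
          mul_nonneg h2 (sq_nonneg _)
        have hprod2 : 0 ≤ (S - |deriv v x|)
            * (|iteratedDeriv 3 v x| * iteratedDeriv 2 v x ^ 2) :=
          mul_nonneg (by linarith) (mul_nonneg (abs_nonneg _) (sq_nonneg _))
        nlinarith [hprod1, hprod2]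
      refine hmono.trans_eq ?_
      rw [intervalIntegral.integral_const_mul]
    have hcs : (∫ x in (0:ℝ)..L, iteratedDeriv 2 v x ^ 2 * |iteratedDeriv 3 v x|)
        ≤ Real.sqrt Q * Real.sqrt E3 := by
      have h := cs_aux hL0 (f := fun x => iteratedDeriv 2 v x ^ 2)
        (g := fun x => |iteratedDeriv 3 v x|) (hc2.pow 2) hc3.abs
      have c1 : (∫ x in (0:ℝ)..L, (iteratedDeriv 2 v x ^ 2) ^ 2)
          = ∫ x in (0:ℝ)..L, iteratedDeriv 2 v x ^ 4 :=
        intervalIntegral.integral_congr fun x _ => by ring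
      have c2 : (∫ x in (0:ℝ)..L, |iteratedDeriv 3 v x| ^ 2)
          = ∫ x in (0:ℝ)..L, iteratedDeriv 3 v x ^ 2 :=
        intervalIntegral.integral_congr fun x _ => sq_abs _
      rwa [c1, ← hQdef, c2, ← hE3def] at h
    have hQle : Q ≤ 3 * S * (Real.sqrt Q * Real.sqrt E3) :=
      hstep.trans (mul_le_mul_of_nonneg_left hcs (by positivity))
    rcases eq_or_lt_of_le (Real.sqrt_nonneg Q) with h | h
    · rw [← h]; positivity
    · have hQQ : Real.sqrt Q * Real.sqrt Q = Q := Real.mul_self_sqrt hQ0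
      have hfin : Real.sqrt Q * Real.sqrt Q ≤ (3 * S * Real.sqrt E3) * Real.sqrt Q := by
        rw [hQQ]
        nlinarith [hQle]
      exact le_of_mul_le_mul_right hfin h
  -- S² ≤ 2 √E1 √E2 (Agmon)
  have hS2 : S ^ 2 ≤ 2 * (Real.sqrt E1 * Real.sqrt E2) := by
    obtain ⟨x₀, hx₀, hx₀val⟩ : ∃ x₀ ∈ Icc (0:ℝ) L, |deriv v x₀| = S := by
      have hcomp : IsCompact ((fun x => |deriv v x|) '' Icc 0 L) :=
        isCompact_Icc.image hc1.abs
      have hne : ((fun x => |deriv v x|) '' Icc 0 L).Nonempty :=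
        (nonempty_Icc.2 hL0).image _
      obtain ⟨x₀, hmem, hval⟩ := hcomp.sSup_mem hne
      exact ⟨x₀, hmem, hval⟩
    have hftc : (∫ x in (0:ℝ)..x₀, 2 * deriv v x * iteratedDeriv 2 v x)
        = deriv v x₀ ^ 2 - deriv v 0 ^ 2 :=
      intervalIntegral.integral_eq_sub_of_hasDerivAt (fun x _ => hD1 x)
        (((continuous_const.mul hc1).mul hc2).intervalIntegrable 0 x₀)
    have h1 : S ^ 2 = ∫ x in (0:ℝ)..x₀, 2 * deriv v x * iteratedDeriv 2 v x := by
      rw [hftc, hz1, ← hx₀val, sq_abs]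
      ring
    have h2 : (∫ x in (0:ℝ)..x₀, 2 * deriv v x * iteratedDeriv 2 v x)
        ≤ ∫ x in (0:ℝ)..x₀, 2 * (|deriv v x| * |iteratedDeriv 2 v x|) := by
      refine intervalIntegral.integral_mono_on hx₀.1
        (((continuous_const.mul hc1).mul hc2).intervalIntegrable 0 x₀)
        ((continuous_const.mul (hc1.abs.mul hc2.abs)).intervalIntegrable 0 x₀)
        fun x _ => ?_
      have h3 := le_abs_self (deriv v x * iteratedDeriv 2 v x)
      rw [abs_mul] at h3
      linarith
    have h3 : (∫ x in (0:ℝ)..x₀, 2 * (|deriv v x| * |iteratedDeriv 2 v x|))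
        ≤ ∫ x in (0:ℝ)..L, 2 * (|deriv v x| * |iteratedDeriv 2 v x|) :=
      intervalIntegral.integral_mono_interval (le_refl (0:ℝ)) hx₀.1 hx₀.2
        (Filter.Eventually.of_forall fun x => by positivity)
        ((continuous_const.mul (hc1.abs.mul hc2.abs)).intervalIntegrable 0 L)
    have h4 : (∫ x in (0:ℝ)..L, 2 * (|deriv v x| * |iteratedDeriv 2 v x|))
        = 2 * ∫ x in (0:ℝ)..L, |deriv v x| * |iteratedDeriv 2 v x| :=
      intervalIntegral.integral_const_mul _ _
    have h5 : (∫ x in (0:ℝ)..L, |deriv v x| * |iteratedDeriv 2 v x|)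
        ≤ Real.sqrt E1 * Real.sqrt E2 := by
      have h := cs_aux hL0 hc1.abs hc2.abs
      have c1 : (∫ x in (0:ℝ)..L, |deriv v x| ^ 2)
          = ∫ x in (0:ℝ)..L, deriv v x ^ 2 :=
        intervalIntegral.integral_congr fun x _ => sq_abs _
      have c2 : (∫ x in (0:ℝ)..L, |iteratedDeriv 2 v x| ^ 2)
          = ∫ x in (0:ℝ)..L, iteratedDeriv 2 v x ^ 2 :=
        intervalIntegral.integral_congr fun x _ => sq_abs _
      rwa [c1, ← hE1def, c2, ← hE2def] at h
    linarith
  -- E3 ≤ √E2 √E4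
  have hE3le : E3 ≤ Real.sqrt E2 * Real.sqrt E4 := by
    have hp := parts_aux (u := iteratedDeriv 2 v) (w := iteratedDeriv 3 v) (L := L)
      (hder 2 (by norm_num)) (hder 3 (by norm_num)) hc3 hc4
      (by rw [(hzero 2).1]; ring) (by rw [(hzero 2).2]; ring)
    have hE3eq : E3 = ∫ x in (0:ℝ)..L, (-(iteratedDeriv 2 v x)) * iteratedDeriv 4 v x := by
      rw [hE3def,
        show (∫ x in (0:ℝ)..L, iteratedDeriv 3 v x ^ 2)
          = ∫ x in (0:ℝ)..L, iteratedDeriv 3 v x * iteratedDeriv 3 v x from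
          intervalIntegral.integral_congr fun x _ => by ring,
        hp, ← intervalIntegral.integral_neg]
      exact intervalIntegral.integral_congr fun x _ => by ring
    have h := cs_aux hL0 (f := fun x => -(iteratedDeriv 2 v x)) hc2.neg hc4
    have c1 : (∫ x in (0:ℝ)..L, (-(iteratedDeriv 2 v x)) ^ 2)
        = ∫ x in (0:ℝ)..L, iteratedDeriv 2 v x ^ 2 :=
      intervalIntegral.integral_congr fun x _ => by ring
    rw [c1, ← hE2def, ← hE4def] at h
    exact hE3eq.trans_le h
  have hcall : ∀ j : ℕ, j ≤ 4 → Continuous (iteratedDeriv j v) := fun j hj =>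
    hv.continuous_iteratedDeriv j (by exact_mod_cast hj)
  have hWk0 : ∀ k : ℕ, 0 ≤ Wk2n k L v := fun k => Real.sqrt_nonneg _
  have hWk2sum : ∀ k : ℕ, k ≤ 4 →
      Continuous fun x => ∑ j ∈ Finset.range (k + 1), iteratedDeriv j v x ^ 2 := by
    intro k hk
    exact continuous_finset_sum _ fun j hj =>
      ((hcall j (le_trans (Nat.lt_succ_iff.1 (Finset.mem_range.1 hj)) hk)).pow 2)
  have hEW : Real.sqrt E3 ≤ Wk2n 3 L v := by
    apply Real.sqrt_le_sqrt
    rw [hE3def]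
    refine intervalIntegral.integral_mono_on hL0 ((hc3.pow 2).intervalIntegrable 0 L)
      ((hWk2sum 3 (by norm_num)).intervalIntegrable 0 L) fun x _ => ?_
    simp only [Finset.sum_range_succ, Finset.sum_range_zero, iteratedDeriv_zero,
      iteratedDeriv_one]
    nlinarith [sq_nonneg (v x), sq_nonneg (deriv v x), sq_nonneg (iteratedDeriv 2 v x)]
  have hE1H : Real.sqrt E1 ≤ Wk2n 2 L v := by
    apply Real.sqrt_le_sqrt
    rw [hE1def]
    refine intervalIntegral.integral_mono_on hL0 ((hc1.pow 2).intervalIntegrable 0 L)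
      ((hWk2sum 2 (by norm_num)).intervalIntegrable 0 L) fun x _ => ?_
    simp only [Finset.sum_range_succ, Finset.sum_range_zero, iteratedDeriv_zero,
      iteratedDeriv_one]
    nlinarith [sq_nonneg (v x), sq_nonneg (iteratedDeriv 2 v x)]
  have hE2H : Real.sqrt E2 ≤ Wk2n 2 L v := by
    apply Real.sqrt_le_sqrt
    rw [hE2def]
    refine intervalIntegral.integral_mono_on hL0 ((hc2.pow 2).intervalIntegrable 0 L)
      ((hWk2sum 2 (by norm_num)).intervalIntegrable 0 L) fun x _ => ?_
    simp only [Finset.sum_range_succ, Finset.sum_range_zero, iteratedDeriv_zero,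
      iteratedDeriv_one]
    nlinarith [sq_nonneg (v x), sq_nonneg (deriv v x)]
  have hE4V : Real.sqrt E4 ≤ Wk2n 4 L v := by
    apply Real.sqrt_le_sqrt
    rw [hE4def]
    refine intervalIntegral.integral_mono_on hL0 ((hc4.pow 2).intervalIntegrable 0 L)
      ((hWk2sum 4 (by norm_num)).intervalIntegrable 0 L) fun x _ => ?_
    simp only [Finset.sum_range_succ, Finset.sum_range_zero, iteratedDeriv_zero,
      iteratedDeriv_one]
    nlinarith [sq_nonneg (v x), sq_nonneg (deriv v x), sq_nonneg (iteratedDeriv 2 v x),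
      sq_nonneg (iteratedDeriv 3 v x)]
  constructor
  · -- first inequality
    have hLinfv0 : 0 ≤ LinfN L v := by
      have hbdd : BddAbove ((fun x => |v x|) '' Icc 0 L) :=
        (isCompact_Icc.image hc0.abs).bddAbove
      exact le_trans (abs_nonneg (v 0)) (le_csSup hbdd ⟨0, ⟨le_refl 0, hL0⟩, rfl⟩)
    have hW1inf : S ≤ W1infN L v := by
      show S ≤ LinfN L v + LinfN L (deriv v)
      rw [← hSdef]
      linarith
    have hW1inf0 : 0 ≤ W1infN L v := le_trans hS0 hW1inf
    set X := ∫ x in (0:ℝ)..L, ∑ j ∈ Finset.range 3, iteratedDeriv j v x ^ 4 with hXdef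
    have hX0 : 0 ≤ X := intervalIntegral.integral_nonneg hL0 fun x _ =>
      Finset.sum_nonneg fun j _ => by positivity
    have hcX : Continuous fun x => ∑ j ∈ Finset.range 3, iteratedDeriv j v x ^ 4 :=
      continuous_finset_sum _ fun j hj =>
        ((hcall j (by have := Finset.mem_range.1 hj; omega)).pow 4)
    have hQX : Q ≤ X := by
      rw [hQdef, hXdef]
      refine intervalIntegral.integral_mono_on hL0 ((hc2.pow 4).intervalIntegrable 0 L)
        (hcX.intervalIntegrable 0 L) fun x _ => ?_
      simp only [Finset.sum_range_succ, Finset.sum_range_zero, iteratedDeriv_zero,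
        iteratedDeriv_one]
      nlinarith [sq_nonneg (v x ^ 2), sq_nonneg (deriv v x ^ 2)]
    have hW24sq : W24n L v ^ 2 = Real.sqrt X := by
      simp only [W24n, ← hXdef]
      rw [← Real.rpow_natCast (X ^ ((1:ℝ)/4)) 2, ← Real.rpow_mul hX0, Real.sqrt_eq_rpow]
      norm_num
    have hQW : Real.sqrt Q ≤ W24n L v ^ 2 := by
      rw [hW24sq]
      exact Real.sqrt_le_sqrt hQX
    have hSE3 : S * Real.sqrt E3 ≤ W1infN L v * Wk2n 3 L v :=
      mul_le_mul hW1inf hEW (Real.sqrt_nonneg _) hW1inf0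
    have hW24sq0 : 0 ≤ W24n L v ^ 2 := sq_nonneg _
    have hB0 : 0 ≤ W1infN L v * Wk2n 3 L v := mul_nonneg hW1inf0 (hWk0 3)
    calc L2n L (iteratedDeriv 2 (fun y => deriv v y ^ 2))
        ≤ 2 * Real.sqrt Q + 2 * (S * Real.sqrt E3) := hmain
      _ ≤ 12 * (W24n L v ^ 2 + W1infN L v * Wk2n 3 L v) := by nlinarith
  · -- second inequality
    have hH0 := hWk0 2
    have hV0 := hWk0 4
    have hE3HV : Real.sqrt E3 ≤ Real.sqrt (Wk2n 2 L v) * Real.sqrt (Wk2n 4 L v) := by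
      have h1 : E3 ≤ Wk2n 2 L v * Wk2n 4 L v :=
        hE3le.trans (mul_le_mul hE2H hE4V (Real.sqrt_nonneg _) hH0)
      calc Real.sqrt E3 ≤ Real.sqrt (Wk2n 2 L v * Wk2n 4 L v) := Real.sqrt_le_sqrt h1
        _ = _ := Real.sqrt_mul hH0 _
    have hSle : S ≤ Real.sqrt 2 * Wk2n 2 L v := by
      have h1 : S ^ 2 ≤ 2 * (Wk2n 2 L v * Wk2n 2 L v) := by
        have h2 := mul_le_mul hE1H hE2H (Real.sqrt_nonneg _) hH0
        nlinarith
      calc S = Real.sqrt (S ^ 2) := (Real.sqrt_sq hS0).symm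
        _ ≤ Real.sqrt (2 * (Wk2n 2 L v * Wk2n 2 L v)) := Real.sqrt_le_sqrt h1
        _ = Real.sqrt 2 * Wk2n 2 L v := by
            rw [Real.sqrt_mul (by norm_num), Real.sqrt_mul_self hH0]
    have hfin : L2n L (iteratedDeriv 2 (fun y => deriv v y ^ 2))
        ≤ 8 * (S * Real.sqrt E3) := by
      linarith [hmain, hQsqrt]
    have hrw1 : Wk2n 4 L v ^ ((1:ℝ)/2) = Real.sqrt (Wk2n 4 L v) :=
      (Real.sqrt_eq_rpow _).symm
    have hrw2 : Wk2n 2 L v ^ ((3:ℝ)/2) = Wk2n 2 L v * Real.sqrt (Wk2n 2 L v) := by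
      rw [show ((3:ℝ)/2) = ((3:ℕ):ℝ) * ((1:ℝ)/2) by norm_num, Real.rpow_mul hH0,
        Real.rpow_natCast, ← Real.sqrt_eq_rpow,
        show Wk2n 2 L v ^ 3 = Wk2n 2 L v ^ 2 * Wk2n 2 L v by ring,
        Real.sqrt_mul (sq_nonneg _), Real.sqrt_sq hH0]
    rw [hrw1, hrw2]
    have hs2le : Real.sqrt 2 ≤ 1.5 := by
      have h := Real.sqrt_le_sqrt (show (2:ℝ) ≤ 1.5 ^ 2 by norm_num)
      rwa [Real.sqrt_sq (by norm_num)] at h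
    have hstep : S * Real.sqrt E3
        ≤ (Real.sqrt 2 * Wk2n 2 L v) * (Real.sqrt (Wk2n 2 L v) * Real.sqrt (Wk2n 4 L v)) :=
      mul_le_mul hSle hE3HV (Real.sqrt_nonneg _) (by positivity)
    have hnn : 0 ≤ Wk2n 2 L v * Real.sqrt (Wk2n 2 L v) * Real.sqrt (Wk2n 4 L v) := by
      positivity
    nlinarith [hfin, hstep, hs2le, hnn]

end
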